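/- If s = σ + it is a complex number with σ > 1 and ζ(s) = 1, then σ ≤ σ₁, where σ₁ is the unique real number greater than 1 satisfying ζ(σ₁) = (2^{σ₁} + 1)/(2^{σ₁} - 1). -/

import Mathlib

open Complex

private lemma sumTailR {σ : ℝ} (hσ : 1 < σ) :
    Summable (fun k : ℕ => (2 * (k : ℝ) + 3) ^ (-σ)) := by
  have h0 : Summable (fun k : ℕ => (((k : ℝ) + 1) ^ σ)⁻¹) := by
    have := Real.summable_nat_rpow_inv.mpr hσ
    rw [← summable_nat_add_iff 1] at this
    simpa using this
  have h1 : Summable (fun k : ℕ => ((k : ℝ) + 1) ^ (-σ)) :=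
    h0.congr fun k => by rw [Real.rpow_neg (by positivity)]
  refine h1.of_nonneg_of_le (fun k => by positivity) fun k => ?_
  rw [Real.rpow_neg (by positivity), Real.rpow_neg (by positivity)]
  have hb : ((k : ℝ) + 1) ^ σ ≤ (2 * (k : ℝ) + 3) ^ σ :=
    Real.rpow_le_rpow (by positivity) (by linarith) (by linarith)
  exact inv_anti₀ (by positivity) hb

private lemma normTail (w : ℂ) (k : ℕ) :
    ‖((2 * (k : ℝ) + 3 : ℝ) : ℂ) ^ (-w)‖ = (2 * (k : ℝ) + 3) ^ (-w.re) := by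
  rw [Complex.norm_cpow_eq_rpow_re_of_pos (by positivity), neg_re]

private lemma sumTailC {w : ℂ} (hw : 1 < w.re) :
    Summable (fun k : ℕ => ((2 * (k : ℝ) + 3 : ℝ) : ℂ) ^ (-w)) := by
  refine Summable.of_norm ?_
  refine (sumTailR hw).congr fun k => ?_
  exact (normTail w k).symm

private lemma zeta_split {w : ℂ} (hw : 1 < w.re) :
    riemannZeta w = 1 + (2 : ℂ) ^ (-w) * riemannZeta w
      + ∑' k : ℕ, ((2 * (k : ℝ) + 3 : ℝ) : ℂ) ^ (-w) := by
  set f : ℕ → ℂ := fun n => (((n : ℝ) + 1 : ℝ) : ℂ) ^ (-w) with hfdef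
  have hζ : riemannZeta w = ∑' n : ℕ, f n := by
    rw [zeta_eq_tsum_one_div_nat_add_one_cpow hw]
    refine tsum_congr fun n => ?_
    rw [hfdef]
    push_cast
    rw [cpow_neg, one_div]
  have hf : Summable f := by
    have := Complex.summable_one_div_nat_cpow.mpr hw
    rw [← summable_nat_add_iff 1] at this
    refine this.congr fun n => ?_
    rw [hfdef]
    push_cast
    rw [cpow_neg, one_div]
  have he : Summable (fun k => f (2 * k)) :=
    hf.comp_injective fun a b h => by omega
  have ho : Summable (fun k => f (2 * k + 1)) :=
    hf.comp_injective fun a b h => by omega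
  have hsplit := tsum_even_add_odd he ho
  -- odd-index part (even n ↦ values at even naturals 2k+2)
  have hodd : ∑' k : ℕ, f (2 * k + 1) = (2 : ℂ) ^ (-w) * riemannZeta w := by
    rw [hζ, ← tsum_mul_left]
    refine tsum_congr fun k => ?_
    have h2 : ((2 * (k : ℕ) + 1 : ℕ) : ℝ) + 1 = (2 : ℝ) * ((k : ℝ) + 1) := by push_cast; ring
    rw [hfdef]
    simp only [h2]
    rw [show ((2 : ℝ) * ((k : ℝ) + 1) : ℝ) = ((2 : ℝ)) * (((k : ℝ) + 1) : ℝ) from rfl]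
    rw [show (((2 : ℝ) * ((k : ℝ) + 1) : ℝ) : ℂ) = ((2 : ℝ) : ℂ) * (((k : ℝ) + 1 : ℝ) : ℂ) by push_cast; ring]
    rw [Complex.mul_cpow_ofReal_nonneg (by norm_num) (by positivity)]
    norm_num
  -- even-index part (odd naturals 2k+1)
  have heven : ∑' k : ℕ, f (2 * k) = 1 + ∑' k : ℕ, ((2 * (k : ℝ) + 3 : ℝ) : ℂ) ^ (-w) := by
    rw [Summable.tsum_eq_zero_add he]
    congr 1
    · rw [hfdef]; norm_num
    · refine tsum_congr fun k => ?_
      rw [hfdef]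
      push_cast
      ring_nf
  conv_lhs => rw [hζ]
  rw [← hsplit, hodd, heven]
  ring

theorem zeta_eq_one_re_le (σ₁ : ℝ) (hσ₁ : 1 < σ₁)
    (hval : riemannZeta σ₁ = (((2 : ℝ) ^ σ₁ + 1) / ((2 : ℝ) ^ σ₁ - 1) : ℝ))
    (huniq : ∀ σ : ℝ, 1 < σ →
      riemannZeta σ = (((2 : ℝ) ^ σ + 1) / ((2 : ℝ) ^ σ - 1) : ℝ) → σ = σ₁)
    (s : ℂ) (hs : 1 < s.re) (hz : riemannZeta s = 1) : s.re ≤ σ₁ := by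
  set σ := s.re with hσdef
  set T : ℝ → ℝ := fun t => ∑' k : ℕ, (2 * (k : ℝ) + 3) ^ (-t) with hTdef
  -- Step 1 : 2 ^ (-σ) ≤ T σ
  have hTC : ∑' k : ℕ, ((2 * (k : ℝ) + 3 : ℝ) : ℂ) ^ (-s) = -(2 : ℂ) ^ (-s) := by
    have := zeta_split hs
    rw [hz] at this
    linear_combination -this
  have hstep1 : (2 : ℝ) ^ (-σ) ≤ T σ := by
    have hnorm : ‖∑' k : ℕ, ((2 * (k : ℝ) + 3 : ℝ) : ℂ) ^ (-s)‖ = (2 : ℝ) ^ (-σ) := by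
      rw [hTC, norm_neg,
        show (2 : ℂ) = ((2 : ℝ) : ℂ) by norm_num,
        Complex.norm_cpow_eq_rpow_re_of_pos (by norm_num), neg_re]
    calc (2 : ℝ) ^ (-σ) = ‖∑' k : ℕ, ((2 * (k : ℝ) + 3 : ℝ) : ℂ) ^ (-s)‖ := hnorm.symm
      _ ≤ ∑' k : ℕ, ‖((2 * (k : ℝ) + 3 : ℝ) : ℂ) ^ (-s)‖ := by
          refine norm_tsum_le_tsum_norm ?_
          exact (sumTailR hs).congr fun k => (normTail s k).symm
      _ = T σ := tsum_congr fun k => normTail s k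
  -- Step 2 : T σ₁ = 2 ^ (-σ₁)
  have hx1 : (1 : ℝ) < (2 : ℝ) ^ σ₁ := by
    have := Real.rpow_lt_rpow_of_exponent_lt (x := 2) (by norm_num) (show (0:ℝ) < σ₁ by linarith)
    simpa using this
  have hstep2 : T σ₁ = (2 : ℝ) ^ (-σ₁) := by
    have hre : (1 : ℝ) < (σ₁ : ℂ).re := by simpa using hσ₁
    have hsp := zeta_split hre
    rw [hval] at hsp
    have h2c : (2 : ℂ) ^ (-(σ₁ : ℂ)) = (((2 : ℝ) ^ (-σ₁) : ℝ) : ℂ) := by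
      rw [Complex.ofReal_cpow (by norm_num : (0:ℝ) ≤ 2)]
      push_cast
      ring_nf
    have htc : ∑' k : ℕ, ((2 * (k : ℝ) + 3 : ℝ) : ℂ) ^ (-(σ₁ : ℂ)) = ((T σ₁ : ℝ) : ℂ) := by
      rw [hTdef]
      rw [Complex.ofReal_tsum]
      refine tsum_congr fun k => ?_
      rw [Complex.ofReal_cpow (by positivity)]
      push_cast
      ring_nf
    rw [h2c, htc] at hsp
    have hreal : (((2 : ℝ) ^ σ₁ + 1) / ((2 : ℝ) ^ σ₁ - 1) : ℝ)
        = 1 + (2 : ℝ) ^ (-σ₁) * (((2 : ℝ) ^ σ₁ + 1) / ((2 : ℝ) ^ σ₁ - 1)) + T σ₁ := by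
      exact_mod_cast hsp
    have hinv : (2 : ℝ) ^ (-σ₁) = ((2 : ℝ) ^ σ₁)⁻¹ := Real.rpow_neg (by norm_num) σ₁
    rw [hinv] at hreal ⊢
    have hne : (2 : ℝ) ^ σ₁ ≠ 0 := by positivity
    have hne1 : (2 : ℝ) ^ σ₁ - 1 ≠ 0 := by linarith
    have hT : T σ₁ = ((2 : ℝ) ^ σ₁ + 1) / ((2 : ℝ) ^ σ₁ - 1) - 1
        - ((2 : ℝ) ^ σ₁)⁻¹ * (((2 : ℝ) ^ σ₁ + 1) / ((2 : ℝ) ^ σ₁ - 1)) := by linarith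
    rw [hT]
    field_simp
    ring
  -- Step 3 : conclude by strict monotonicity
  by_contra hcon
  push_neg at hcon
  set g : ℝ → ℕ → ℝ := fun t k => (2 / (2 * (k : ℝ) + 3)) ^ t with hgdef
  have hgeq : ∀ t : ℝ, ∀ k : ℕ, g t k = (2 : ℝ) ^ t * (2 * (k : ℝ) + 3) ^ (-t) := by
    intro t k
    rw [hgdef]
    simp only
    rw [Real.div_rpow (by norm_num) (by positivity), Real.rpow_neg (by positivity), div_eq_mul_inv]
  have hgsum : ∀ t : ℝ, 1 < t → Summable (g t) := by
    intro t ht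
    refine ((sumTailR ht).mul_left ((2:ℝ) ^ t)).congr fun k => (hgeq t k).symm
  have hgt : ∀ t : ℝ, 1 < t → ∑' k, g t k = (2 : ℝ) ^ t * T t := by
    intro t ht
    rw [hTdef, ← tsum_mul_left]
    exact tsum_congr fun k => hgeq t k
  have hσgt : 1 < σ := hs
  have hlt : ∑' k, g σ k < ∑' k, g σ₁ k := by
    refine Summable.tsum_lt_tsum (i := 0) ?_ ?_ (hgsum σ hσgt) (hgsum σ₁ hσ₁)
    · intro k
      rw [hgdef]
      simp only
      refine Real.rpow_le_rpow_of_exponent_ge (by positivity) ?_ hcon.le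
      rw [div_le_one (by positivity)]
      linarith [Nat.cast_nonneg (α := ℝ) k]
    · rw [hgdef]
      simp only [Nat.cast_zero]
      refine Real.rpow_lt_rpow_of_exponent_gt (by norm_num) (by norm_num) hcon
  rw [hgt σ hσgt, hgt σ₁ hσ₁, hstep2] at hlt
  have hone : (2 : ℝ) ^ σ₁ * (2 : ℝ) ^ (-σ₁) = 1 := by
    rw [Real.rpow_neg (by norm_num)]
    exact mul_inv_cancel₀ (by positivity)
  have hge : (1 : ℝ) ≤ (2 : ℝ) ^ σ * T σ := by
    calc (1 : ℝ) = (2 : ℝ) ^ σ * (2 : ℝ) ^ (-σ) := by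
          rw [Real.rpow_neg (by norm_num)]; exact (mul_inv_cancel₀ (by positivity)).symm
      _ ≤ (2 : ℝ) ^ σ * T σ := by
          exact mul_le_mul_of_nonneg_left hstep1 (by positivity)
  rw [hone] at hlt
  linarith
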